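/- arXiv:2210.12057 — 5 statements merged into one kernel-verified Lean document; each statement's English description precedes it below -/
import Mathlib

section
/- Conversely, any nonnegative vector μ ∈ ℝ_+^{X×A} satisfying E^T μ = (1−γ)ν₀ + γ P^T μ is the occupancy measure of the policy π_μ(a|x) = μ(x,a)/Σ_{a'} μ(x,a') (defined arbitrarily where the denominator is zero), i.e., μ = μ^{π_μ}. -/
open Matrix Finset

/-- State-action transition matrix under policy `π`. -/
noncomputable def stepMatrix {X A : Type*} [Fintype X] [Fintype A]
    (P : X → A → X → ℝ) (π : X → A → ℝ) : Matrix (X × A) (X × A) ℝ :=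
  fun z z' => P z.1 z.2 z'.1 * π z'.1 z'.2

/-- Occupancy measure of policy `π` with initial distribution `ν₀`. -/
noncomputable def occupancy {X A : Type*} [Fintype X] [Fintype A] [DecidableEq X] [DecidableEq A]
    (P : X → A → X → ℝ) (π : X → A → ℝ) (ν₀ : X → ℝ) (γ : ℝ) (z : X × A) : ℝ :=
  (1 - γ) * ∑' t : ℕ, γ ^ t * ((fun z' : X × A => ν₀ z'.1 * π z'.1 z'.2) ᵥ* (stepMatrix P π ^ t)) z

/-- Any nonnegative vector `μ` satisfying the flow constraint
`E^T μ = (1−γ)ν₀ + γP^T μ` is the occupancy measure of the policy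
`π_μ(a|x) = μ(x,a)/Σ_{a'} μ(x,a')` (defined arbitrarily where the
denominator is zero). -/
theorem stmt8 {X A : Type*} [Fintype X] [Fintype A] [DecidableEq X] [DecidableEq A]
    (P : X → A → X → ℝ) (ν₀ : X → ℝ) (γ : ℝ)
    (hγ : γ ∈ Set.Ioo (0 : ℝ) 1)
    (hP_nonneg : ∀ x a x', 0 ≤ P x a x') (hP_sum : ∀ x a, ∑ x', P x a x' = 1)
    (hν₀_nonneg : ∀ x, 0 ≤ ν₀ x) (hν₀_sum : ∑ x, ν₀ x = 1)
    (μ : X × A → ℝ) (hμ_nonneg : ∀ z, 0 ≤ μ z)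
    (hflow : ∀ x : X, ∑ a, μ (x, a)
        = (1 - γ) * ν₀ x + γ * ∑ z : X × A, P z.1 z.2 x * μ z)
    (π : X → A → ℝ)
    (hπ_nonneg : ∀ x a, 0 ≤ π x a) (hπ_sum : ∀ x, ∑ a, π x a = 1)
    (hπμ : ∀ x a, (∑ a', μ (x, a')) ≠ 0 → π x a = μ (x, a) / ∑ a', μ (x, a')) :
    μ = occupancy P π ν₀ γ := by
  obtain ⟨hγ0, hγ1⟩ := hγ
  set M := stepMatrix P π with hM
  set c : X × A → ℝ := fun z => ν₀ z.1 * π z.1 z.2 with hc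
  -- nonnegativity of powers of M
  have hMpow_nonneg : ∀ n : ℕ, ∀ z z', 0 ≤ (M ^ n) z z' := by
    intro n
    induction n with
    | zero => intro z z'; simp [Matrix.one_apply]; split <;> norm_num
    | succ n ih =>
      intro z z'
      rw [pow_succ, Matrix.mul_apply]
      exact Finset.sum_nonneg fun w _ =>
        mul_nonneg (ih z w) (mul_nonneg (hP_nonneg _ _ _) (hπ_nonneg _ _))
  -- row sums of powers of M are 1
  have hMrow : ∀ z, ∑ z', M z z' = 1 := by
    intro z
    rw [Fintype.sum_prod_type]
    simp only [hM, stepMatrix]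
    calc ∑ x', ∑ a', P z.1 z.2 x' * π x' a'
        = ∑ x', P z.1 z.2 x' * ∑ a', π x' a' := by
          congr 1; ext x'; rw [Finset.mul_sum]
      _ = 1 := by simp [hπ_sum, hP_sum]
  have hMpow_row : ∀ n : ℕ, ∀ z, ∑ z', (M ^ n) z z' = 1 := by
    intro n
    induction n with
    | zero => intro z; simp [Matrix.one_apply]
    | succ n ih =>
      intro z
      simp only [pow_succ, Matrix.mul_apply]
      rw [Finset.sum_comm]
      calc ∑ w, ∑ z', (M ^ n) z w * M w z'
          = ∑ w, (M ^ n) z w * ∑ z', M w z' := by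
            congr 1; ext w; rw [Finset.mul_sum]
        _ = 1 := by simp only [hMrow, mul_one]; exact ih z
  -- entries of M^n are ≤ 1
  have hMpow_le_one : ∀ n : ℕ, ∀ z z', (M ^ n) z z' ≤ 1 := by
    intro n z z'
    calc (M ^ n) z z' ≤ ∑ w, (M ^ n) z w :=
          Finset.single_le_sum (fun w _ => hMpow_nonneg n z w) (Finset.mem_univ z')
      _ = 1 := hMpow_row n z
  -- key: μ decomposes
  have hkey : ∀ z : X × A, μ z = π z.1 z.2 * ∑ a', μ (z.1, a') := by
    rintro ⟨x, a⟩
    by_cases hS : (∑ a', μ (x, a')) = 0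
    · have : μ (x, a) = 0 := by
        have h := Finset.sum_eq_zero_iff_of_nonneg (fun a' _ => hμ_nonneg (x, a')) |>.mp hS
        exact h a (Finset.mem_univ a)
      simp [this, hS]
    · rw [hπμ x a hS]
      field_simp
  -- fixed point equation
  have hfix : ∀ z : X × A, μ z = (1 - γ) * c z + γ * (μ ᵥ* M) z := by
    rintro ⟨x, a⟩
    have h1 : (μ ᵥ* M) (x, a) = π x a * ∑ z : X × A, P z.1 z.2 x * μ z := by
      simp only [Matrix.vecMul, dotProduct, hM, stepMatrix]
      rw [Finset.mul_sum]
      congr 1; ext z; ring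
    rw [h1, hkey (x, a)]
    simp only [hc]
    rw [hflow x]
    ring
  -- induction: partial sum decomposition
  have hind : ∀ n : ℕ, ∀ z : X × A,
      μ z = (1 - γ) * ∑ t ∈ Finset.range n, γ ^ t * (c ᵥ* (M ^ t)) z
            + γ ^ n * (μ ᵥ* (M ^ n)) z := by
    intro n
    induction n with
    | zero => intro z; simp [Matrix.vecMul_one]
    | succ n ih =>
      intro z
      have hpow : μ ᵥ* (M ^ (n + 1)) = (μ ᵥ* M) ᵥ* (M ^ n) := by
        rw [Matrix.vecMul_vecMul, ← pow_succ']
      have step : (μ ᵥ* (M ^ n)) z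
          = (1 - γ) * (c ᵥ* (M ^ n)) z + γ * (μ ᵥ* (M ^ (n + 1))) z := by
        rw [hpow]
        calc (μ ᵥ* (M ^ n)) z
            = ∑ w, μ w * (M ^ n) w z := rfl
          _ = ∑ w, ((1 - γ) * c w + γ * (μ ᵥ* M) w) * (M ^ n) w z :=
              Finset.sum_congr rfl fun w _ => by rw [← hfix w]
          _ = ∑ w, ((1 - γ) * (c w * (M ^ n) w z)
                + γ * ((μ ᵥ* M) w * (M ^ n) w z)) :=
              Finset.sum_congr rfl fun w _ => by ring
          _ = (1 - γ) * ∑ w, c w * (M ^ n) w z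
                + γ * ∑ w, (μ ᵥ* M) w * (M ^ n) w z := by
              rw [Finset.sum_add_distrib, ← Finset.mul_sum, ← Finset.mul_sum]
          _ = (1 - γ) * (c ᵥ* (M ^ n)) z + γ * ((μ ᵥ* M) ᵥ* (M ^ n)) z := rfl
      rw [ih z, step, Finset.sum_range_succ]
      ring
  -- nonnegativity of c ᵥ* M^t
  have hcM_nonneg : ∀ t : ℕ, ∀ z, 0 ≤ (c ᵥ* (M ^ t)) z := by
    intro t z
    apply Finset.sum_nonneg
    intro w _
    exact mul_nonneg (mul_nonneg (hν₀_nonneg _) (hπ_nonneg _ _)) (hMpow_nonneg t w z)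
  -- tail bound
  set K : ℝ := ∑ z', μ z' with hK
  have hK_nonneg : 0 ≤ K := Finset.sum_nonneg fun z _ => hμ_nonneg z
  have htail_bound : ∀ n : ℕ, ∀ z, 0 ≤ (μ ᵥ* (M ^ n)) z ∧ (μ ᵥ* (M ^ n)) z ≤ K := by
    intro n z
    constructor
    · exact Finset.sum_nonneg fun w _ => mul_nonneg (hμ_nonneg w) (hMpow_nonneg n w z)
    · calc (μ ᵥ* (M ^ n)) z = ∑ w, μ w * (M ^ n) w z := rfl
        _ ≤ ∑ w, μ w * 1 := Finset.sum_le_sum fun w _ =>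
            mul_le_mul_of_nonneg_left (hMpow_le_one n w z) (hμ_nonneg w)
        _ = K := by simp [hK]
  -- conclude pointwise
  funext z
  have htail : Filter.Tendsto (fun n => γ ^ n * (μ ᵥ* (M ^ n)) z) Filter.atTop (nhds 0) := by
    apply squeeze_zero
    · intro n; exact mul_nonneg (pow_nonneg hγ0.le n) (htail_bound n z).1
    · intro n
      exact mul_le_mul_of_nonneg_left (htail_bound n z).2 (pow_nonneg hγ0.le n)
    · have : Filter.Tendsto (fun n : ℕ => γ ^ n) Filter.atTop (nhds 0) :=
        tendsto_pow_atTop_nhds_zero_of_lt_one hγ0.le hγ1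
      simpa using this.mul_const K
  have hsn : Filter.Tendsto
      (fun n => ∑ t ∈ Finset.range n, γ ^ t * (c ᵥ* (M ^ t)) z)
      Filter.atTop (nhds (μ z / (1 - γ))) := by
    have heq : ∀ n, ∑ t ∈ Finset.range n, γ ^ t * (c ᵥ* (M ^ t)) z
        = (μ z - γ ^ n * (μ ᵥ* (M ^ n)) z) / (1 - γ) := by
      intro n
      have h := hind n z
      have h1γ : (1 : ℝ) - γ ≠ 0 := by linarith
      field_simp
      linarith [h]
    simp only [heq]
    have : Filter.Tendsto (fun n => μ z - γ ^ n * (μ ᵥ* (M ^ n)) z)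
        Filter.atTop (nhds (μ z)) := by
      have := (tendsto_const_nhds (x := μ z) (f := Filter.atTop (α := ℕ))).sub htail
      simpa using this
    exact this.div_const (1 - γ)
  have hhas : HasSum (fun t => γ ^ t * (c ᵥ* (M ^ t)) z) (μ z / (1 - γ)) := by
    rw [hasSum_iff_tendsto_nat_of_nonneg
      (fun t => mul_nonneg (pow_nonneg hγ0.le t) (hcM_nonneg t z))]
    exact hsn
  have h1γ : (1 : ℝ) - γ ≠ 0 := by linarith
  rw [occupancy]
  rw [hhas.tsum_eq]
  field_simp
end

section
/- Suppose the MDP is linear (P = ΦW, r = Φϑ for feature matrix Φ ∈ ℝ^{XA×d}) and the core state-action assumption holds exactly (Φ = BUΦ with B, U row-stochastic). Then for any feasible pair (λ, u) of the relaxed primal LP — i.e., λ ∈ ℝ_+^m, u ∈ ℝ_+^{XA}, E^T u = (1−γ)ν₀ + γ P^T U^T λ, and Φ^T U^T λ = Φ^T u — the vector u is a valid occupancy measure, i.e., E^T u = (1−γ)ν₀ + γ P^T u. -/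
open Matrix Finset

/-- Under the linear MDP assumption (`P = ΦW`) and the exact core assumption
(`Φ = BUΦ`), any feasible pair `(λ, u)` of the relaxed primal LP has `u`
satisfying the occupancy-measure flow constraint
`E^T u = (1−γ)ν₀ + γP^T u`. -/
theorem stmt10 {X A : Type*} [Fintype X] [Fintype A] {dd m : ℕ}
    (Φ : Matrix (X × A) (Fin dd) ℝ)
    (U : Matrix (Fin m) (X × A) ℝ) (B : Matrix (X × A) (Fin m) ℝ)
    (hU_nonneg : ∀ i z, 0 ≤ U i z) (hU_sum : ∀ i, ∑ z, U i z = 1)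
    (hB_nonneg : ∀ z i, 0 ≤ B z i) (hB_sum : ∀ z, ∑ i, B z i = 1)
    (hcore : B * U * Φ = Φ)
    (Pm : Matrix (X × A) X ℝ) (W : Matrix (Fin dd) X ℝ) (hlin : Pm = Φ * W)
    (ϑ : Fin dd → ℝ) (r : X × A → ℝ) (hr : r = Φ *ᵥ ϑ)
    (γ : ℝ) (hγ : γ ∈ Set.Ioo (0 : ℝ) 1)
    (ν₀ : X → ℝ)
    (lam : Fin m → ℝ) (u : X × A → ℝ)
    (hlam_nonneg : ∀ i, 0 ≤ lam i) (hu_nonneg : ∀ z, 0 ≤ u z)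
    (hflow : ∀ x, ∑ a, u (x, a) = (1 - γ) * ν₀ x + γ * (Pmᵀ *ᵥ (Uᵀ *ᵥ lam)) x)
    (hmatch : Φᵀ *ᵥ (Uᵀ *ᵥ lam) = Φᵀ *ᵥ u) :
    ∀ x, ∑ a, u (x, a) = (1 - γ) * ν₀ x + γ * (Pmᵀ *ᵥ u) x := by
  have key : Pmᵀ *ᵥ u = Pmᵀ *ᵥ (Uᵀ *ᵥ lam) := by
    rw [hlin, transpose_mul, ← mulVec_mulVec, ← mulVec_mulVec, hmatch]
  intro x
  rw [key]
  exact hflow x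
end

section
/- Under the exact core assumption Φ = BUΦ and linear rewards r = Φϑ, any occupancy measure μ ∈ M extends to a feasible point of the relaxed primal LP by setting λ = B^T μ, and the objectives agree: ⟨B^T μ, U r⟩ = ⟨μ, r⟩. Consequently the optimal value of the relaxed LP equals the optimal return max_{μ ∈ M} ⟨μ, r⟩ and is attained by (B^T μ*, μ*) for an optimal occupancy measure μ*. -/
open Matrix Finset

/-- Under the exact core assumption `Φ = BUΦ` and the linear MDP assumption,
any occupancy measure `μ` extends to a feasible point `(B^T μ, μ)` of the
relaxed primal LP with matching objective `⟨B^T μ, Ur⟩ = ⟨μ, r⟩`; consequently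
the optimal value of the relaxed LP equals the optimal return and is attained
at `(B^T μ*, μ*)`. -/
theorem stmt11 {X A : Type*} [Fintype X] [Fintype A] {dd m : ℕ}
    (Φ : Matrix (X × A) (Fin dd) ℝ)
    (U : Matrix (Fin m) (X × A) ℝ) (B : Matrix (X × A) (Fin m) ℝ)
    (hU_nonneg : ∀ i z, 0 ≤ U i z) (hU_sum : ∀ i, ∑ z, U i z = 1)
    (hB_nonneg : ∀ z i, 0 ≤ B z i) (hB_sum : ∀ z, ∑ i, B z i = 1)
    (hcore : B * U * Φ = Φ)
    (Pm : Matrix (X × A) X ℝ) (W : Matrix (Fin dd) X ℝ) (hlin : Pm = Φ * W)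
    (ϑ : Fin dd → ℝ) (r : X × A → ℝ) (hr : r = Φ *ᵥ ϑ)
    (γ : ℝ) (hγ : γ ∈ Set.Ioo (0 : ℝ) 1)
    (ν₀ : X → ℝ)
    -- μ* is an optimal occupancy measure
    (μstar : X × A → ℝ) (hμstar_nonneg : ∀ z, 0 ≤ μstar z)
    (hμstar_flow : ∀ x, ∑ a, μstar (x, a) = (1 - γ) * ν₀ x + γ * (Pmᵀ *ᵥ μstar) x)
    (hμstar_opt : ∀ μ : X × A → ℝ, (∀ z, 0 ≤ μ z) →
      (∀ x, ∑ a, μ (x, a) = (1 - γ) * ν₀ x + γ * (Pmᵀ *ᵥ μ) x) →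
      μ ⬝ᵥ r ≤ μstar ⬝ᵥ r) :
    -- every occupancy measure yields a feasible point with the same objective
    (∀ μ : X × A → ℝ, (∀ z, 0 ≤ μ z) →
      (∀ x, ∑ a, μ (x, a) = (1 - γ) * ν₀ x + γ * (Pmᵀ *ᵥ μ) x) →
      (∀ i, 0 ≤ (Bᵀ *ᵥ μ) i) ∧
      (∀ x, ∑ a, μ (x, a) = (1 - γ) * ν₀ x + γ * (Pmᵀ *ᵥ (Uᵀ *ᵥ (Bᵀ *ᵥ μ))) x) ∧
      (Φᵀ *ᵥ (Uᵀ *ᵥ (Bᵀ *ᵥ μ)) = Φᵀ *ᵥ μ) ∧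
      ((Bᵀ *ᵥ μ) ⬝ᵥ (U *ᵥ r) = μ ⬝ᵥ r)) ∧
    -- every feasible point of the relaxed LP has objective at most the optimal return
    (∀ (lam : Fin m → ℝ) (u : X × A → ℝ), (∀ i, 0 ≤ lam i) → (∀ z, 0 ≤ u z) →
      (∀ x, ∑ a, u (x, a) = (1 - γ) * ν₀ x + γ * (Pmᵀ *ᵥ (Uᵀ *ᵥ lam)) x) →
      (Φᵀ *ᵥ (Uᵀ *ᵥ lam) = Φᵀ *ᵥ u) →
      lam ⬝ᵥ (U *ᵥ r) ≤ μstar ⬝ᵥ r) ∧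
    -- the optimum is attained at (B^T μ*, μ*)
    ((Bᵀ *ᵥ μstar) ⬝ᵥ (U *ᵥ r) = μstar ⬝ᵥ r) := by
  -- transposed core identity
  have hcoreT : Φᵀ * (Uᵀ * Bᵀ) = Φᵀ := by
    have := congrArg Matrix.transpose hcore
    simpa [Matrix.transpose_mul, Matrix.mul_assoc] using this
  have hkey : ∀ v : X × A → ℝ, Φᵀ *ᵥ (Uᵀ *ᵥ (Bᵀ *ᵥ v)) = Φᵀ *ᵥ v := by
    intro v
    rw [Matrix.mulVec_mulVec, Matrix.mulVec_mulVec, Matrix.mul_assoc, hcoreT]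
  have hPkey : ∀ v : X × A → ℝ, Pmᵀ *ᵥ (Uᵀ *ᵥ (Bᵀ *ᵥ v)) = Pmᵀ *ᵥ v := by
    intro v
    have h1 : Pmᵀ = Wᵀ * Φᵀ := by rw [hlin, Matrix.transpose_mul]
    rw [h1, ← Matrix.mulVec_mulVec, hkey, Matrix.mulVec_mulVec]
  have hBUr : B *ᵥ (U *ᵥ r) = r := by
    rw [hr, Matrix.mulVec_mulVec, Matrix.mulVec_mulVec, hcore]
  have hobj : ∀ v : X × A → ℝ, (Bᵀ *ᵥ v) ⬝ᵥ (U *ᵥ r) = v ⬝ᵥ r := by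
    intro v
    rw [Matrix.mulVec_transpose, ← Matrix.dotProduct_mulVec, Matrix.mulVec_mulVec,
      ← Matrix.mulVec_mulVec, hBUr]
  refine ⟨?_, ?_, hobj μstar⟩
  · intro μ hμ hflow
    refine ⟨?_, ?_, hkey μ, hobj μ⟩
    · intro i
      simp only [Matrix.mulVec, dotProduct, Matrix.transpose_apply]
      exact Finset.sum_nonneg fun z _ => mul_nonneg (hB_nonneg z i) (hμ z)
    · intro x
      rw [hPkey]
      exact hflow x
  · intro lam u hlam hu hflow hΦ
    have hP : Pmᵀ *ᵥ (Uᵀ *ᵥ lam) = Pmᵀ *ᵥ u := by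
      have h1 : Pmᵀ = Wᵀ * Φᵀ := by rw [hlin, Matrix.transpose_mul]
      rw [h1, ← Matrix.mulVec_mulVec, hΦ, Matrix.mulVec_mulVec]
    have hflow' : ∀ x, ∑ a, u (x, a) = (1 - γ) * ν₀ x + γ * (Pmᵀ *ᵥ u) x := by
      intro x
      rw [← hP]
      exact hflow x
    have hle : u ⬝ᵥ r ≤ μstar ⬝ᵥ r := hμstar_opt u hu hflow'
    have heq : lam ⬝ᵥ (U *ᵥ r) = u ⬝ᵥ r := by
      have h2 : lam ⬝ᵥ (U *ᵥ r) = (Uᵀ *ᵥ lam) ⬝ᵥ r := by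
        rw [Matrix.dotProduct_mulVec, Matrix.mulVec_transpose]
      have h3 : (Uᵀ *ᵥ lam) ⬝ᵥ r = u ⬝ᵥ r := by
        rw [hr, Matrix.dotProduct_mulVec, Matrix.dotProduct_mulVec,
          ← Matrix.mulVec_transpose, ← Matrix.mulVec_transpose, hΦ]
      rw [h2, h3]
    rw [heq]; exact hle
end

section
/- Under the exact core and linear MDP assumptions, any feasible point (V, θ) of the relaxed dual LP — EV ≥ Φθ and U Φθ ≥ U(r + γPV) — satisfies V ≥ V* and Φθ ≥ Q*. In particular (V*, θ*) with Q* = Φθ* is optimal for the relaxed dual LP. -/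
open Matrix Finset

/-- Under the exact core and linear MDP assumptions, any feasible point `(V, θ)`
of the relaxed dual LP satisfies `V ≥ V*` and `Φθ ≥ Q*`; in particular
`(V*, θ*)` with `Q* = Φθ*` is feasible and optimal for the relaxed dual LP. -/
theorem stmt12 {X A : Type*} [Fintype X] [Fintype A] [Nonempty A] {dd m : ℕ}
    (Φ : Matrix (X × A) (Fin dd) ℝ)
    (U : Matrix (Fin m) (X × A) ℝ) (B : Matrix (X × A) (Fin m) ℝ)
    (hU_nonneg : ∀ i z, 0 ≤ U i z) (hU_sum : ∀ i, ∑ z, U i z = 1)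
    (hB_nonneg : ∀ z i, 0 ≤ B z i) (hB_sum : ∀ z, ∑ i, B z i = 1)
    (hcore : B * U * Φ = Φ)
    (Pm : Matrix (X × A) X ℝ) (W : Matrix (Fin dd) X ℝ) (hlin : Pm = Φ * W)
    (hPm_nonneg : ∀ z x', 0 ≤ Pm z x') (hPm_sum : ∀ z, ∑ x', Pm z x' = 1)
    (ϑ : Fin dd → ℝ) (r : X × A → ℝ) (hr : r = Φ *ᵥ ϑ)
    (γ : ℝ) (hγ : γ ∈ Set.Ioo (0 : ℝ) 1)
    (ν₀ : X → ℝ) (hν₀_nonneg : ∀ x, 0 ≤ ν₀ x)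
    -- the optimal value functions, as fixed points of the Bellman optimality equations
    (Vstar : X → ℝ) (Qstar : X × A → ℝ)
    (hQstar : ∀ z, Qstar z = r z + γ * (Pm *ᵥ Vstar) z)
    (hVstar : ∀ x, Vstar x = Finset.univ.sup' Finset.univ_nonempty (fun a => Qstar (x, a)))
    (θstar : Fin dd → ℝ) (hθstar : Φ *ᵥ θstar = Qstar)
    -- a feasible point (V, θ) of the relaxed dual LP
    (V : X → ℝ) (θ : Fin dd → ℝ)
    (hfeas1 : ∀ z : X × A, (Φ *ᵥ θ) z ≤ V z.1)
    (hfeas2 : ∀ i, (U *ᵥ fun z => r z + γ * (Pm *ᵥ V) z) i ≤ (U *ᵥ (Φ *ᵥ θ)) i) :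
    (∀ x, Vstar x ≤ V x) ∧
    (∀ z, Qstar z ≤ (Φ *ᵥ θ) z) ∧
    -- (V*, θ*) is feasible
    ((∀ z : X × A, (Φ *ᵥ θstar) z ≤ Vstar z.1) ∧
      (∀ i, (U *ᵥ fun z => r z + γ * (Pm *ᵥ Vstar) z) i ≤ (U *ᵥ (Φ *ᵥ θstar)) i)) ∧
    -- and optimal
    ((1 - γ) * (ν₀ ⬝ᵥ Vstar) ≤ (1 - γ) * (ν₀ ⬝ᵥ V)) := by

  obtain ⟨hγ0, hγ1⟩ := hγ
  -- r + γ P V lies in the span of Φ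
  have hg : (fun z => r z + γ * (Pm *ᵥ V) z) = Φ *ᵥ (ϑ + γ • (W *ᵥ V)) := by
    funext z
    simp [hr, hlin, Matrix.mulVec_add, Matrix.mulVec_smul, ← Matrix.mulVec_mulVec]
  have hgfix : (fun z => r z + γ * (Pm *ᵥ V) z)
      = B *ᵥ (U *ᵥ (fun z => r z + γ * (Pm *ᵥ V) z)) := by
    conv_rhs => rw [hg]
    rw [Matrix.mulVec_mulVec, Matrix.mulVec_mulVec, hcore, ← hg]
  have hΦθ : Φ *ᵥ θ = B *ᵥ (U *ᵥ (Φ *ᵥ θ)) := by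
    rw [Matrix.mulVec_mulVec, Matrix.mulVec_mulVec, hcore]
  have key : ∀ z, r z + γ * (Pm *ᵥ V) z ≤ (Φ *ᵥ θ) z := by
    intro z
    have h1 : (B *ᵥ (U *ᵥ fun z => r z + γ * (Pm *ᵥ V) z)) z
        ≤ (B *ᵥ (U *ᵥ (Φ *ᵥ θ))) z := by
      simp only [Matrix.mulVec, dotProduct]
      exact Finset.sum_le_sum fun i _ =>
        mul_le_mul_of_nonneg_left (hfeas2 i) (hB_nonneg z i)
    calc r z + γ * (Pm *ᵥ V) z
        = (B *ᵥ (U *ᵥ fun z => r z + γ * (Pm *ᵥ V) z)) z := congrFun hgfix z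
      _ ≤ (B *ᵥ (U *ᵥ (Φ *ᵥ θ))) z := h1
      _ = (Φ *ᵥ θ) z := (congrFun hΦθ z).symm
  have hbell : ∀ z : X × A, r z + γ * (Pm *ᵥ V) z ≤ V z.1 :=
    fun z => (key z).trans (hfeas1 z)
  rcases isEmpty_or_nonempty X with hX | hX
  · refine ⟨fun x => (hX.false x).elim, fun z => (hX.false z.1).elim,
      ⟨fun z => (hX.false z.1).elim, fun i => ?_⟩, ?_⟩
    · simp [Matrix.mulVec, dotProduct]
    · simp [dotProduct]
  · haveI := hX
    set M := Finset.univ.sup' Finset.univ_nonempty (fun x => Vstar x - V x) with hM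
    have hMle : ∀ x, Vstar x - V x ≤ M := fun x => Finset.le_sup' (fun x => Vstar x - V x) (mem_univ x)
    have hPle : ∀ z, (Pm *ᵥ Vstar) z - (Pm *ᵥ V) z ≤ γ⁻¹ * (γ * M) := by
      intro z
      have heq : (Pm *ᵥ Vstar) z - (Pm *ᵥ V) z = ∑ x', Pm z x' * (Vstar x' - V x') := by
        simp [Matrix.mulVec, dotProduct, mul_sub, Finset.sum_sub_distrib]
      rw [heq, inv_mul_cancel_left₀ (ne_of_gt hγ0)]
      calc ∑ x', Pm z x' * (Vstar x' - V x')
          ≤ ∑ x', Pm z x' * M :=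
            Finset.sum_le_sum fun x' _ =>
              mul_le_mul_of_nonneg_left (hMle x') (hPm_nonneg z x')
        _ = M := by rw [← Finset.sum_mul, hPm_sum, one_mul]
    have hPle' : ∀ z, (Pm *ᵥ Vstar) z - (Pm *ᵥ V) z ≤ M := by
      intro z
      have := hPle z
      rwa [inv_mul_cancel_left₀ (ne_of_gt hγ0)] at this
    have hstep : ∀ x, Vstar x - V x ≤ γ * M := by
      intro x
      rw [hVstar x, sub_le_iff_le_add]
      apply Finset.sup'_le
      intro a _
      have h1 := hbell (x, a)
      have h2 := mul_le_mul_of_nonneg_left (hPle' (x, a)) hγ0.le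
      rw [hQstar (x, a)]
      simp only at h1 h2 ⊢
      linarith [h2, h1]
    have hMγ : M ≤ γ * M := Finset.sup'_le _ _ fun x _ => hstep x
    have hM0 : M ≤ 0 := by nlinarith
    have hVle : ∀ x, Vstar x ≤ V x := by
      intro x
      have := hMle x
      linarith
    have hPmono : ∀ z, (Pm *ᵥ Vstar) z ≤ (Pm *ᵥ V) z := by
      intro z
      simp only [Matrix.mulVec, dotProduct]
      exact Finset.sum_le_sum fun x' _ =>
        mul_le_mul_of_nonneg_left (hVle x') (hPm_nonneg z x')
    have hQle : ∀ z, Qstar z ≤ (Φ *ᵥ θ) z := by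
      intro z
      rw [hQstar z]
      have h2 := mul_le_mul_of_nonneg_left (hPmono z) hγ0.le
      linarith [key z]
    refine ⟨hVle, hQle, ⟨?_, ?_⟩, ?_⟩
    · intro z
      rw [hθstar, hVstar z.1]
      exact Finset.le_sup' (fun a => Qstar (z.1, a)) (mem_univ z.2)
    · intro i
      have heq : (fun z => r z + γ * (Pm *ᵥ Vstar) z) = Φ *ᵥ θstar := by
        funext z
        rw [hθstar]
        exact (hQstar z).symm
      rw [heq]
    · apply mul_le_mul_of_nonneg_left _ (by linarith : (0:ℝ) ≤ 1 - γ)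
      simp only [dotProduct]
      exact Finset.sum_le_sum fun x _ =>
        mul_le_mul_of_nonneg_left (hVle x) (hν₀_nonneg x)
end

section
/- With zero approximation errors (IBE = 0, ε_π = 0 for all policies, and Δ_core = 0), evaluating the Lagrangian at the comparator (λ*, μ*) = (B^T μ*, μ*) and any (θ_t, V_t) with V_t = M^{π_t}Φθ_t gives L(λ*, μ*; θ_t, V_t) = ⟨μ*, r⟩, the optimal return. -/
open Matrix Finset

/-- The Lagrangian
`L(λ, u; θ, V) = ⟨λ, U(r + γPV − Φθ)⟩ + (1−γ)⟨ν₀, V⟩ + ⟨u, Φθ − EV⟩`. -/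
noncomputable def Lag {X A : Type*} [Fintype X] [Fintype A] {dd m : ℕ}
    (Φ : Matrix (X × A) (Fin dd) ℝ) (U : Matrix (Fin m) (X × A) ℝ)
    (Pm : Matrix (X × A) X ℝ) (r : X × A → ℝ) (ν₀ : X → ℝ) (γ : ℝ)
    (lam : Fin m → ℝ) (u : X × A → ℝ) (θ : Fin dd → ℝ) (V : X → ℝ) : ℝ :=
  lam ⬝ᵥ (U *ᵥ fun z => r z + γ * (Pm *ᵥ V) z - (Φ *ᵥ θ) z)
    + (1 - γ) * (ν₀ ⬝ᵥ V)
    + u ⬝ᵥ (fun z => (Φ *ᵥ θ) z - V z.1)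

/-- With zero approximation errors (`Δ_core = 0` i.e. `BUΦ = Φ`, and zero IBE so
that `r + γPV_t − Q_t` is exactly linearly representable), evaluating the
Lagrangian at the comparator `(B^T μ*, μ*)` gives the optimal return `⟨μ*, r⟩`. -/
theorem stmt14 {X A : Type*} [Fintype X] [Fintype A] {dd m : ℕ}
    (Φ : Matrix (X × A) (Fin dd) ℝ)
    (U : Matrix (Fin m) (X × A) ℝ) (B : Matrix (X × A) (Fin m) ℝ)
    (hU_nonneg : ∀ i z, 0 ≤ U i z) (hU_sum : ∀ i, ∑ z, U i z = 1)
    (hB_nonneg : ∀ z i, 0 ≤ B z i) (hB_sum : ∀ z, ∑ i, B z i = 1)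
    (hcore : B * U * Φ = Φ)
    (Pm : Matrix (X × A) X ℝ) (r : X × A → ℝ) (ν₀ : X → ℝ)
    (γ : ℝ) (hγ : γ ∈ Set.Ioo (0 : ℝ) 1)
    -- μ* is the occupancy measure of an optimal policy
    (μstar : X × A → ℝ) (hμstar_nonneg : ∀ z, 0 ≤ μstar z)
    (hμstar_flow : ∀ x, ∑ a, μstar (x, a) = (1 - γ) * ν₀ x + γ * (Pmᵀ *ᵥ μstar) x)
    (θt : Fin dd → ℝ) (Vt : X → ℝ)
    -- zero inherent Bellman error: r + γPV_t − Φθ_t is linearly representable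
    (hIBE : ∃ θ' : Fin dd → ℝ,
      Φ *ᵥ θ' = fun z => r z + γ * (Pm *ᵥ Vt) z - (Φ *ᵥ θt) z) :
    Lag Φ U Pm r ν₀ γ (Bᵀ *ᵥ μstar) μstar θt Vt = μstar ⬝ᵥ r := by
  unfold Lag
  obtain ⟨θ', hθ'⟩ := hIBE
  rw [← hθ', mulVec_transpose, ← dotProduct_mulVec, mulVec_mulVec, mulVec_mulVec, hcore, hθ']
  have h2 : ∑ z : X × A, μstar z * (Pm *ᵥ Vt) z = ∑ x, (Pmᵀ *ᵥ μstar) x * Vt x := by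
    simp only [mulVec, dotProduct, transpose_apply, Finset.mul_sum, Finset.sum_mul]
    rw [Finset.sum_comm]
    apply Finset.sum_congr rfl; intros; apply Finset.sum_congr rfl; intros; ring
  have h3 : ∑ z : X × A, μstar z * Vt z.1 = ∑ x, ((1 - γ) * ν₀ x + γ * (Pmᵀ *ᵥ μstar) x) * Vt x := by
    rw [Fintype.sum_prod_type]
    apply Finset.sum_congr rfl; intro x _
    rw [← hμstar_flow, Finset.sum_mul]
  have h2' : ∑ z : X × A, μstar z * (γ * (Pm *ᵥ Vt) z) = γ * ∑ x, (Pmᵀ *ᵥ μstar) x * Vt x := by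
    rw [← h2, Finset.mul_sum]; apply Finset.sum_congr rfl; intros; ring
  have h4 : ∑ x, ((1 - γ) * ν₀ x + γ * (Pmᵀ *ᵥ μstar) x) * Vt x
      = ∑ x, (1 - γ) * (ν₀ x * Vt x) + γ * ∑ x, (Pmᵀ *ᵥ μstar) x * Vt x := by
    simp only [add_mul]
    rw [Finset.sum_add_distrib, Finset.mul_sum]
    congr 1 <;> (apply Finset.sum_congr rfl; intros; ring)
  simp only [dotProduct, mul_sub, mul_add, Finset.sum_sub_distrib, Finset.sum_add_distrib,
    Finset.mul_sum] at *
  rw [h2', h3, h4]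
  ring
end
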